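/- In the tree sequent calculus LSkT, the cut rule is admissible: given derivations of U ⊢ A and T[A] ⊢ C, there is a derivation of T[U] ⊢ C. -/
import Mathlib


/-- Formulae of left skew monoidal closed logic: atoms, unit I, ⊗, ⊸. -/
inductive Fma : Type
  | atom : ℕ → Fma
  | I : Fma
  | tens : Fma → Fma → Fma
  | lolli : Fma → Fma → Fma

/-- Trees: formulae, the empty tree, and pairing. -/
inductive Tr : Type
  | fma : Fma → Tr
  | emp : Tr
  | pair : Tr → Tr → Tr

/-- Contexts: trees with a single hole. -/
inductive Ctx : Type
  | hole : Ctx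
  | pairL : Ctx → Tr → Ctx
  | pairR : Tr → Ctx → Ctx

/-- Substitution of a tree into the hole of a context. -/
def plug : Ctx → Tr → Tr
  | Ctx.hole, U => U
  | Ctx.pairL C T, U => Tr.pair (plug C U) T
  | Ctx.pairR T C, U => Tr.pair T (plug C U)

/-- Derivability in the tree sequent calculus LSkT: `TDer T A` means `T ⊢ A`. -/
inductive TDer : Tr → Fma → Prop
  | ax {A} : TDer (Tr.fma A) A
  | IL {T C} : TDer (plug T Tr.emp) C → TDer (plug T (Tr.fma Fma.I)) C
  | IR : TDer Tr.emp Fma.I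
  | tensL {T A B C} : TDer (plug T (Tr.pair (Tr.fma A) (Tr.fma B))) C →
      TDer (plug T (Tr.fma (Fma.tens A B))) C
  | tensR {T U A B} : TDer T A → TDer U B → TDer (Tr.pair T U) (Fma.tens A B)
  | lolliL {T U A B C} : TDer U A → TDer (plug T (Tr.fma B)) C →
      TDer (plug T (Tr.pair (Tr.fma (Fma.lolli A B)) U)) C
  | lolliR {T A B} : TDer (Tr.pair T (Tr.fma A)) B → TDer T (Fma.lolli A B)
  | assoc {T U₀ U₁ U₂ C} : TDer (plug T (Tr.pair U₀ (Tr.pair U₁ U₂))) C →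
      TDer (plug T (Tr.pair (Tr.pair U₀ U₁) U₂)) C
  | unitL {T U C} : TDer (plug T U) C → TDer (plug T (Tr.pair Tr.emp U)) C
  | unitR {T U C} : TDer (plug T (Tr.pair U Tr.emp)) C → TDer (plug T U) C

namespace CutAux

/-- Composition of contexts. -/
def comp : Ctx → Ctx → Ctx
  | Ctx.hole, D => D
  | Ctx.pairL C r, D => Ctx.pairL (comp C D) r
  | Ctx.pairR l C, D => Ctx.pairR l (comp C D)

@[simp] lemma plug_comp (C D : Ctx) (t : Tr) :
    plug (comp C D) t = plug C (plug D t) := by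
  induction C <;> simp [comp, plug, *]

@[simp] lemma comp_hole (C : Ctx) : comp C Ctx.hole = C := by
  induction C <;> simp [comp, *]

lemma fma_eq_plug {T : Ctx} {x : Tr} {B : Fma} (h : Tr.fma B = plug T x) :
    T = Ctx.hole ∧ x = Tr.fma B := by
  cases T with
  | hole => exact ⟨rfl, h.symm⟩
  | pairL C r => simp [plug] at h
  | pairR l C => simp [plug] at h

/-- Orthogonality: two decompositions of a tree are nested one way, the
other way, or disjoint. -/
lemma orth : ∀ (T : Ctx) (t : Tr) (S : Ctx) (s : Tr), plug T t = plug S s →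
    (∃ D, T = comp S D ∧ s = plug D t) ∨
    (∃ D, S = comp T D ∧ t = plug D s) ∨
    (∃ F G : Tr → Ctx, (∀ x y, plug (F x) y = plug (G y) x) ∧
        F t = S ∧ G s = T) := by
  intro T
  induction T with
  | hole =>
    intro t S s h
    exact Or.inr (Or.inl ⟨S, rfl, h⟩)
  | pairL T₁ r ih =>
    intro t S s h
    cases S with
    | hole =>
      exact Or.inl ⟨Ctx.pairL T₁ r, rfl, h.symm⟩
    | pairL S₁ r' =>
      simp only [plug, Tr.pair.injEq] at h
      obtain ⟨h1, h2⟩ := h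
      subst h2
      rcases ih t S₁ s h1 with ⟨D, hD, hs⟩ | ⟨D, hD, ht⟩ | ⟨F, G, hFG, hF, hG⟩
      · exact Or.inl ⟨D, by rw [hD]; rfl, hs⟩
      · exact Or.inr (Or.inl ⟨D, by rw [hD]; rfl, ht⟩)
      · refine Or.inr (Or.inr ⟨fun x => Ctx.pairL (F x) r, fun y => Ctx.pairL (G y) r,
          fun x y => by simp [plug, hFG x y], by simp [hF], by simp [hG]⟩)
    | pairR l S₁ =>
      simp only [plug, Tr.pair.injEq] at h
      obtain ⟨h1, h2⟩ := h
      refine Or.inr (Or.inr ⟨fun x => Ctx.pairR (plug T₁ x) S₁,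
        fun y => Ctx.pairL T₁ (plug S₁ y),
        fun x y => by simp [plug], ?_, ?_⟩)
      · simp [h1]
      · simp [← h2]
  | pairR l T₁ ih =>
    intro t S s h
    cases S with
    | hole =>
      exact Or.inl ⟨Ctx.pairR l T₁, rfl, h.symm⟩
    | pairL S₁ r' =>
      simp only [plug, Tr.pair.injEq] at h
      obtain ⟨h1, h2⟩ := h
      refine Or.inr (Or.inr ⟨fun x => Ctx.pairL S₁ (plug T₁ x),
        fun y => Ctx.pairR (plug S₁ y) T₁,
        fun x y => by simp [plug], ?_, ?_⟩)
      · simp [← h2, h1]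
      · simp [h1]
    | pairR l' S₁ =>
      simp only [plug, Tr.pair.injEq] at h
      obtain ⟨h2, h1⟩ := h
      subst h2
      rcases ih t S₁ s h1 with ⟨D, hD, hs⟩ | ⟨D, hD, ht⟩ | ⟨F, G, hFG, hF, hG⟩
      · exact Or.inl ⟨D, by rw [hD]; rfl, hs⟩
      · exact Or.inr (Or.inl ⟨D, by rw [hD]; rfl, ht⟩)
      · refine Or.inr (Or.inr ⟨fun x => Ctx.pairR l (F x), fun y => Ctx.pairR l (G y),
          fun x y => by simp [plug, hFG x y], by simp [hF], by simp [hG]⟩)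

end CutAux
namespace CutAux

/-- Generic induction on the left premise of a cut: commute all left and
structural rules, and hand over the principal (right-rule) cases. -/
lemma leftInd {U : Tr} {A : Fma} (f : TDer U A) : ∀ (T : Ctx) (C : Fma),
    TDer (plug T (Tr.fma A)) C →
    (A = Fma.I → TDer (plug T Tr.emp) C) →
    (∀ A1 A2 U1 U2, A = Fma.tens A1 A2 → TDer U1 A1 → TDer U2 A2 →
        TDer (plug T (Tr.pair U1 U2)) C) →
    (∀ A1 A2 V, A = Fma.lolli A1 A2 → TDer (Tr.pair V (Tr.fma A1)) A2 →
        TDer (plug T V) C) →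
    TDer (plug T U) C := by
  induction f with
  | ax => intro T C hax _ _ _; exact hax
  | IR => intro T C _ hI _ _; exact hI rfl
  | tensR f1 f2 => intro T C _ _ ht _; exact ht _ _ _ _ rfl f1 f2
  | lolliR f' => intro T C _ _ _ hl; exact hl _ _ _ rfl f'
  | @IL Tf A p ih =>
    intro T C hax hI ht hl
    have h := ih T C hax hI ht hl
    have h' : TDer (plug (comp T Tf) Tr.emp) C := by simpa using h
    simpa using TDer.IL h'
  | @tensL Tf A' B' A p ih =>
    intro T C hax hI ht hl
    have h := ih T C hax hI ht hl
    have h' : TDer (plug (comp T Tf) (Tr.pair (Tr.fma A') (Tr.fma B'))) C := by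
      simpa using h
    simpa using TDer.tensL h'
  | @lolliL Tf Uf A' B' A p1 p2 ih1 ih2 =>
    intro T C hax hI ht hl
    have h := ih2 T C hax hI ht hl
    have h' : TDer (plug (comp T Tf) (Tr.fma B')) C := by simpa using h
    simpa using TDer.lolliL p1 h'
  | @assoc Tf U₀ U₁ U₂ A p ih =>
    intro T C hax hI ht hl
    have h := ih T C hax hI ht hl
    have h' : TDer (plug (comp T Tf) (Tr.pair U₀ (Tr.pair U₁ U₂))) C := by
      simpa using h
    simpa using TDer.assoc h'
  | @unitL Tf Uf A p ih =>
    intro T C hax hI ht hl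
    have h := ih T C hax hI ht hl
    have h' : TDer (plug (comp T Tf) Uf) C := by simpa using h
    simpa using TDer.unitL h'
  | @unitR Tf Uf A p ih =>
    intro T C hax hI ht hl
    have h := ih T C hax hI ht hl
    have h' : TDer (plug (comp T Tf) (Tr.pair Uf Tr.emp)) C := by simpa using h
    simpa using TDer.unitR h'

def CutStmt (A : Fma) : Prop :=
  ∀ (U : Tr) (T : Ctx) (C : Fma), TDer U A →
    TDer (plug T (Tr.fma A)) C → TDer (plug T U) C

lemma gInd (A : Fma)
    (htensIH : ∀ A1 A2, A = Fma.tens A1 A2 → CutStmt A1 ∧ CutStmt A2)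
    (hlolliIH : ∀ A1 A2, A = Fma.lolli A1 A2 → CutStmt A1 ∧ CutStmt A2) :
    CutStmt A := by
  have main : ∀ (V : Tr) (C : Fma), TDer V C → ∀ (T : Ctx) (U : Tr),
      V = plug T (Tr.fma A) → TDer U A → TDer (plug T U) C := by
    intro V C g
    induction g with
    | @ax B =>
      intro T U hV f
      cases T with
      | hole =>
        simp only [plug, Tr.fma.injEq] at hV
        subst hV; exact f
      | pairL T' r => simp [plug] at hV
      | pairR l T' => simp [plug] at hV
    | @IL Tg C p ih =>
      intro T U hV f
      have principal : A = Fma.I → TDer (plug Tg U) C := by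
        intro hA; subst hA
        refine leftInd f Tg C (TDer.IL p) (fun _ => p) ?_ ?_
        · intro _ _ _ _ h _ _; exact Fma.noConfusion h
        · intro _ _ _ h _; exact Fma.noConfusion h
      rcases orth T (Tr.fma A) Tg (Tr.fma Fma.I) hV.symm with
        ⟨D, hT, hs⟩ | ⟨D, hS, ht⟩ | ⟨F, G, hFG, hF, hG⟩
      · obtain ⟨hD, hA⟩ := fma_eq_plug hs
        subst hD
        injection hA with hA
        rw [hT, comp_hole]
        exact principal hA
      · obtain ⟨hD, hA⟩ := fma_eq_plug ht
        subst hD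
        injection hA with hA
        rw [show T = Tg from by rw [hS, comp_hole]]
        exact principal hA.symm
      · have e : plug Tg Tr.emp = plug (G Tr.emp) (Tr.fma A) := by
          rw [← hF, hFG]
        have h := ih (G Tr.emp) U e f
        rw [← hFG] at h
        have h2 := TDer.IL h
        rw [hFG, hG] at h2
        exact h2
    | IR =>
      intro T U hV f
      cases T <;> simp [plug] at hV
    | @tensL Tg A' B' C p ih =>
      intro T U hV f
      have principal : A = Fma.tens A' B' → TDer (plug Tg U) C := by
        intro hA; subst hA
        obtain ⟨c1, c2⟩ := htensIH A' B' rfl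
        refine leftInd f Tg C (TDer.tensL p) ?_ ?_ ?_
        · intro h; exact Fma.noConfusion h
        · intro A1 A2 U1 U2 h f1 f2
          injection h with e1 e2; subst e1; subst e2
          have s1 := c1 U1 (comp Tg (Ctx.pairL Ctx.hole (Tr.fma B'))) C f1
            (by simpa [plug] using p)
          have s1' : TDer (plug Tg (Tr.pair U1 (Tr.fma B'))) C := by
            simpa [plug] using s1
          have s2 := c2 U2 (comp Tg (Ctx.pairR U1 Ctx.hole)) C f2
            (by simpa [plug] using s1')
          simpa [plug] using s2
        · intro _ _ _ h _; exact Fma.noConfusion h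
      rcases orth T (Tr.fma A) Tg (Tr.fma (Fma.tens A' B')) hV.symm with
        ⟨D, hT, hs⟩ | ⟨D, hS, ht⟩ | ⟨F, G, hFG, hF, hG⟩
      · obtain ⟨hD, hA⟩ := fma_eq_plug hs
        subst hD
        injection hA with hA
        rw [hT, comp_hole]
        exact principal hA
      · obtain ⟨hD, hA⟩ := fma_eq_plug ht
        subst hD
        injection hA with hA
        rw [show T = Tg from by rw [hS, comp_hole]]
        exact principal hA.symm
      · have e : plug Tg (Tr.pair (Tr.fma A') (Tr.fma B')) =
            plug (G (Tr.pair (Tr.fma A') (Tr.fma B'))) (Tr.fma A) := by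
          rw [← hF, hFG]
        have h := ih _ U e f
        rw [← hFG] at h
        have h2 := TDer.tensL h
        rw [hFG, hG] at h2
        exact h2
    | @tensR V1 V2 B1 B2 g1 g2 ih1 ih2 =>
      intro T U hV f
      cases T with
      | hole => simp [plug] at hV
      | pairL T' r =>
        simp only [plug, Tr.pair.injEq] at hV
        obtain ⟨h1, h2⟩ := hV
        subst h2
        exact TDer.tensR (ih1 T' U h1 f) g2
      | pairR l T' =>
        simp only [plug, Tr.pair.injEq] at hV
        obtain ⟨h1, h2⟩ := hV
        subst h1
        exact TDer.tensR g1 (ih2 T' U h2 f)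
    | @lolliL Tg Ug A' B' C g1 g2 ih1 ih2 =>
      intro T U hV f
      rcases orth T (Tr.fma A) Tg (Tr.pair (Tr.fma (Fma.lolli A' B')) Ug) hV.symm with
        ⟨D, hT, hs⟩ | ⟨D, hS, ht⟩ | ⟨F, G, hFG, hF, hG⟩
      · subst hT
        cases D with
        | hole => simp [plug] at hs
        | pairL D' u =>
          simp only [plug, Tr.pair.injEq] at hs
          obtain ⟨h1, h2⟩ := hs
          subst h2
          obtain ⟨hD', hA⟩ := fma_eq_plug h1
          subst hD'
          injection hA with hA
          subst hA
          obtain ⟨c1, c2⟩ := hlolliIH A' B' rfl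
          refine leftInd f (comp Tg (Ctx.pairL Ctx.hole Ug)) C ?_ ?_ ?_ ?_
          · simpa [plug] using TDer.lolliL g1 g2
          · intro h; exact Fma.noConfusion h
          · intro _ _ _ _ h _ _; exact Fma.noConfusion h
          · intro A1 A2 V h f'
            injection h with e1 e2; subst e1; subst e2
            have s1 : TDer (Tr.pair V Ug) B' := by
              have := c1 Ug (Ctx.pairR V Ctx.hole) B' g1
                (show TDer (plug (Ctx.pairR V Ctx.hole) (Tr.fma A')) B' from f')
              simpa [plug] using this
            have s2 := c2 (Tr.pair V Ug) Tg C s1 g2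
            simpa [plug] using s2
        | pairR u D'' =>
          simp only [plug, Tr.pair.injEq] at hs
          obtain ⟨h1, h2⟩ := hs
          subst h1
          have h := ih1 D'' U h2 f
          have h2' := TDer.lolliL h g2
          simpa [plug] using h2'
      · obtain ⟨hD, hx⟩ := fma_eq_plug ht
        exact Tr.noConfusion hx
      · have e : plug Tg (Tr.fma B') = plug (G (Tr.fma B')) (Tr.fma A) := by
          rw [← hF, hFG]
        have h := ih2 _ U e f
        rw [← hFG] at h
        have h2 := TDer.lolliL g1 h
        rw [hFG, hG] at h2
        exact h2
    | @lolliR V B1 B2 g' ih =>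
      intro T U hV f
      subst hV
      have h := ih (Ctx.pairL T (Tr.fma B1)) U rfl f
      exact TDer.lolliR h
    | @assoc Tg U₀ U₁ U₂ C p ih =>
      intro T U hV f
      rcases orth T (Tr.fma A) Tg (Tr.pair (Tr.pair U₀ U₁) U₂) hV.symm with
        ⟨D, hT, hs⟩ | ⟨D, hS, ht⟩ | ⟨F, G, hFG, hF, hG⟩
      · subst hT
        cases D with
        | hole => simp [plug] at hs
        | pairL D₁ u =>
          simp only [plug, Tr.pair.injEq] at hs
          obtain ⟨h1, h2⟩ := hs
          subst h2
          cases D₁ with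
          | hole => simp [plug] at h1
          | pairL D₀ u' =>
            simp only [plug, Tr.pair.injEq] at h1
            obtain ⟨h10, h11⟩ := h1
            subst h11
            have h := ih (comp Tg (Ctx.pairL D₀ (Tr.pair U₁ U₂))) U
              (by rw [h10]; simp [plug]) f
            have h' : TDer (plug Tg (Tr.pair (plug D₀ U) (Tr.pair U₁ U₂))) C := by
              simpa [plug] using h
            simpa [plug] using TDer.assoc h'
          | pairR u' D₀ =>
            simp only [plug, Tr.pair.injEq] at h1
            obtain ⟨h10, h11⟩ := h1
            subst h10
            have h := ih (comp Tg (Ctx.pairR U₀ (Ctx.pairL D₀ U₂))) U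
              (by rw [h11]; simp [plug]) f
            have h' : TDer (plug Tg (Tr.pair U₀ (Tr.pair (plug D₀ U) U₂))) C := by
              simpa [plug] using h
            simpa [plug] using TDer.assoc h'
        | pairR u D₂ =>
          simp only [plug, Tr.pair.injEq] at hs
          obtain ⟨h1, h2⟩ := hs
          subst h1
          have h := ih (comp Tg (Ctx.pairR U₀ (Ctx.pairR U₁ D₂))) U
            (by rw [h2]; simp [plug]) f
          have h' : TDer (plug Tg (Tr.pair U₀ (Tr.pair U₁ (plug D₂ U)))) C := by
            simpa [plug] using h
          simpa [plug] using TDer.assoc h'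
      · obtain ⟨hD, hx⟩ := fma_eq_plug ht
        exact Tr.noConfusion hx
      · have e : plug Tg (Tr.pair U₀ (Tr.pair U₁ U₂)) =
            plug (G (Tr.pair U₀ (Tr.pair U₁ U₂))) (Tr.fma A) := by
          rw [← hF, hFG]
        have h := ih _ U e f
        rw [← hFG] at h
        have h2 := TDer.assoc h
        rw [hFG, hG] at h2
        exact h2
    | @unitL Tg Ug C p ih =>
      intro T U hV f
      rcases orth T (Tr.fma A) Tg (Tr.pair Tr.emp Ug) hV.symm with
        ⟨D, hT, hs⟩ | ⟨D, hS, ht⟩ | ⟨F, G, hFG, hF, hG⟩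
      · subst hT
        cases D with
        | hole => simp [plug] at hs
        | pairL D' u =>
          simp only [plug, Tr.pair.injEq] at hs
          obtain ⟨h1, h2⟩ := hs
          cases D' <;> simp [plug] at h1
        | pairR u D'' =>
          simp only [plug, Tr.pair.injEq] at hs
          obtain ⟨h1, h2⟩ := hs
          subst h1
          have h := ih (comp Tg D'') U (by rw [h2]; simp) f
          have h' : TDer (plug Tg (plug D'' U)) C := by simpa using h
          simpa [plug] using TDer.unitL (T := Tg) h'
      · obtain ⟨hD, hx⟩ := fma_eq_plug ht
        exact Tr.noConfusion hx
      · have e : plug Tg Ug = plug (G Ug) (Tr.fma A) := by rw [← hF, hFG]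
        have h := ih _ U e f
        rw [← hFG] at h
        have h2 := TDer.unitL h
        rw [hFG, hG] at h2
        exact h2
    | @unitR Tg Ug C p ih =>
      intro T U hV f
      rcases orth T (Tr.fma A) Tg Ug hV.symm with
        ⟨D, hT, hs⟩ | ⟨D, hS, ht⟩ | ⟨F, G, hFG, hF, hG⟩
      · subst hT
        have h := ih (comp Tg (Ctx.pairL D Tr.emp)) U
          (by rw [hs]; simp [plug]) f
        have h' : TDer (plug Tg (Tr.pair (plug D U) Tr.emp)) C := by
          simpa [plug] using h
        simpa using TDer.unitR h'
      · cases D with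
        | hole =>
          rw [comp_hole] at hS
          subst hS
          simp only [plug] at ht
          have h := ih (comp Tg (Ctx.pairL Ctx.hole Tr.emp)) U
            (by rw [← ht]; simp [plug]) f
          have h' : TDer (plug Tg (Tr.pair U Tr.emp)) C := by
            simpa [plug] using h
          exact TDer.unitR h'
        | pairL D' u => simp [plug] at ht
        | pairR u D' => simp [plug] at ht
      · have e : plug Tg (Tr.pair Ug Tr.emp) =
            plug (G (Tr.pair Ug Tr.emp)) (Tr.fma A) := by rw [← hF, hFG]
        have h := ih _ U e f
        rw [← hFG] at h
        have h2 := TDer.unitR h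
        rw [hFG, hG] at h2
        exact h2
  intro U T C f g
  exact main _ C g T U rfl f

theorem cutAll : ∀ A, CutStmt A := by
  intro A
  induction A with
  | atom n =>
    exact gInd _ (fun _ _ h => Fma.noConfusion h) (fun _ _ h => Fma.noConfusion h)
  | I =>
    exact gInd _ (fun _ _ h => Fma.noConfusion h) (fun _ _ h => Fma.noConfusion h)
  | tens A1 A2 ih1 ih2 =>
    refine gInd _ ?_ (fun _ _ h => Fma.noConfusion h)
    intro B1 B2 h
    injection h with e1 e2; subst e1; subst e2
    exact ⟨ih1, ih2⟩
  | lolli A1 A2 ih1 ih2 =>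
    refine gInd _ (fun _ _ h => Fma.noConfusion h) ?_
    intro B1 B2 h
    injection h with e1 e2; subst e1; subst e2
    exact ⟨ih1, ih2⟩

end CutAux

/-- Admissibility of cut in LSkT. -/
theorem cut_admissible (T : Ctx) (U : Tr) (A C : Fma)
    (f : TDer U A) (g : TDer (plug T (Tr.fma A)) C) : TDer (plug T U) C :=
  CutAux.cutAll A U T C f g
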